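/- Let (C,d) be a complete metric space, M, N, O ≥ 0 with M+N+O < 1, and T₁, T₂ : C → C satisfy d(T₁x, T₂y) ≤ M·d(x,y) + N·d(x,T₁x) + O·d(y,T₂y) for all x,y ∈ C. Then T₁ and T₂ have a unique common fixed point. -/
import Mathlib


/-- Reich-type common fixed point theorem for a pair of maps. -/
theorem stmt8 {C : Type*} [MetricSpace C] [CompleteSpace C] [Nonempty C]
    (M N O : ℝ) (hM : 0 ≤ M) (hN : 0 ≤ N) (hO : 0 ≤ O) (hsum : M + N + O < 1)
    (T₁ T₂ : C → C)
    (hT : ∀ x y : C,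
      dist (T₁ x) (T₂ y) ≤
        M * dist x y + N * dist x (T₁ x) + O * dist y (T₂ y)) :
    ∃! z : C, T₁ z = z ∧ T₂ z = z := by
  have hN1 : N < 1 := by linarith
  have hO1 : O < 1 := by linarith
  set k₁ : ℝ := (M + N) / (1 - O) with hk₁
  set k₂ : ℝ := (M + O) / (1 - N) with hk₂
  have hk₁0 : 0 ≤ k₁ := div_nonneg (by linarith) (by linarith)
  have hk₂0 : 0 ≤ k₂ := div_nonneg (by linarith) (by linarith)
  set r : ℝ := k₂ * k₁ with hr
  have hr0 : 0 ≤ r := mul_nonneg hk₂0 hk₁0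
  have hr1 : r < 1 := by
    rw [hr, hk₁, hk₂, div_mul_div_comm, div_lt_one (by nlinarith)]
    nlinarith
  -- key contraction estimates
  have key1 : ∀ x, dist (T₁ x) (T₂ (T₁ x)) ≤ k₁ * dist x (T₁ x) := by
    intro x
    have h := hT x (T₁ x)
    rw [hk₁, div_mul_eq_mul_div, le_div_iff₀ (by linarith)]
    nlinarith [dist_nonneg (x := T₁ x) (y := T₂ (T₁ x))]
  have key2 : ∀ y, dist (T₂ y) (T₁ (T₂ y)) ≤ k₂ * dist y (T₂ y) := by
    intro y
    have h := hT (T₂ y) y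
    rw [dist_comm (T₂ y) (T₁ (T₂ y))]
    rw [hk₂, div_mul_eq_mul_div, le_div_iff₀ (by linarith)]
    rw [dist_comm (T₂ y) y, dist_comm (T₂ y) (T₁ (T₂ y))] at h
    nlinarith [dist_nonneg (x := T₁ (T₂ y)) (y := T₂ y)]
  set S : C → C := fun x => T₂ (T₁ x) with hS
  set φ : C → ℝ := fun x => dist x (T₁ x) with hφ
  have key3 : ∀ x, φ (S x) ≤ r * φ x := by
    intro x
    calc φ (S x) = dist (T₂ (T₁ x)) (T₁ (T₂ (T₁ x))) := rfl
      _ ≤ k₂ * dist (T₁ x) (T₂ (T₁ x)) := key2 (T₁ x)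
      _ ≤ k₂ * (k₁ * dist x (T₁ x)) :=
          mul_le_mul_of_nonneg_left (key1 x) hk₂0
      _ = r * φ x := by ring
  have step : ∀ x, dist x (S x) ≤ (1 + k₁) * φ x := by
    intro x
    calc dist x (S x) ≤ dist x (T₁ x) + dist (T₁ x) (T₂ (T₁ x)) := dist_triangle _ _ _
      _ ≤ φ x + k₁ * φ x := by exact add_le_add le_rfl (key1 x)
      _ = (1 + k₁) * φ x := by ring
  obtain ⟨x₀⟩ := ‹Nonempty C›
  set xs : ℕ → C := fun n => S^[n] x₀ with hxs
  have hxs_succ : ∀ n, xs (n + 1) = S (xs n) := by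
    intro n; rw [hxs]; simp [Function.iterate_succ_apply']
  have hφn : ∀ n, φ (xs n) ≤ φ x₀ * r ^ n := by
    intro n
    induction n with
    | zero => simp [hxs]
    | succ n ih =>
      rw [hxs_succ]
      calc φ (S (xs n)) ≤ r * φ (xs n) := key3 _
        _ ≤ r * (φ x₀ * r ^ n) := mul_le_mul_of_nonneg_left ih hr0
        _ = φ x₀ * r ^ (n + 1) := by ring
  have hcauchy : CauchySeq xs := by
    apply cauchySeq_of_le_geometric r ((1 + k₁) * φ x₀) hr1
    intro n
    rw [hxs_succ]
    calc dist (xs n) (S (xs n)) ≤ (1 + k₁) * φ (xs n) := step _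
      _ ≤ (1 + k₁) * (φ x₀ * r ^ n) :=
        mul_le_mul_of_nonneg_left (hφn n) (by linarith)
      _ = (1 + k₁) * φ x₀ * r ^ n := by ring
  obtain ⟨z, hz⟩ := cauchySeq_tendsto_of_complete hcauchy
  -- φ (xs n) → 0
  have hφ0 : Filter.Tendsto (fun n => φ (xs n)) Filter.atTop (nhds 0) := by
    apply squeeze_zero (fun n => dist_nonneg) hφn
    simpa using (tendsto_pow_atTop_nhds_zero_of_lt_one hr0 hr1).const_mul (φ x₀)
  have hdz : Filter.Tendsto (fun n => dist (xs n) z) Filter.atTop (nhds 0) := by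
    simpa using hz.dist (tendsto_const_nhds (x := z))
  have hT₁z : Filter.Tendsto (fun n => dist z (T₁ (xs n))) Filter.atTop (nhds 0) := by
    apply squeeze_zero (fun n => dist_nonneg)
      (g := fun n => dist (xs n) z + φ (xs n))
    · intro n
      calc dist z (T₁ (xs n)) ≤ dist z (xs n) + dist (xs n) (T₁ (xs n)) := dist_triangle _ _ _
        _ = dist (xs n) z + φ (xs n) := by rw [dist_comm]
    · simpa using hdz.add hφ0
  have hdz1 : Filter.Tendsto (fun n => dist (xs (n + 1)) z) Filter.atTop (nhds 0) := by
    exact hdz.comp (Filter.tendsto_add_atTop_nat 1)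
  -- show T₁ z = z
  have hfix1 : T₁ z = z := by
    have hbound : ∀ n, (1 - N) * dist (T₁ z) z ≤
        M * dist z (T₁ (xs n)) + O * (k₁ * φ (xs n)) + dist (xs (n + 1)) z := by
      intro n
      have h := hT z (T₁ (xs n))
      have h2 : dist (T₁ (xs n)) (T₂ (T₁ (xs n))) ≤ k₁ * φ (xs n) := key1 (xs n)
      have h3 : dist (T₁ z) z ≤ dist (T₁ z) (T₂ (T₁ (xs n))) + dist (xs (n + 1)) z := by
        rw [hxs_succ]
        exact dist_triangle _ _ _
      have hdc : dist z (T₁ z) = dist (T₁ z) z := dist_comm _ _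
      nlinarith [dist_nonneg (x := T₁ (xs n)) (y := T₂ (T₁ (xs n))), hO,
        mul_le_mul_of_nonneg_left h2 hO]
    have hlim : Filter.Tendsto
        (fun n => M * dist z (T₁ (xs n)) + O * (k₁ * φ (xs n)) + dist (xs (n + 1)) z)
        Filter.atTop (nhds 0) := by
      have := ((hT₁z.const_mul M).add ((hφ0.const_mul k₁).const_mul O)).add hdz1
      simpa using this
    have hle : (1 - N) * dist (T₁ z) z ≤ 0 := ge_of_tendsto' hlim hbound
    have : dist (T₁ z) z = 0 := by
      nlinarith [dist_nonneg (x := T₁ z) (y := z)]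
    exact dist_eq_zero.mp this
  have hfix2 : T₂ z = z := by
    have h := hT z z
    rw [hfix1] at h
    simp at h
    have : dist z (T₂ z) = 0 := by nlinarith [dist_nonneg (x := z) (y := T₂ z)]
    exact (dist_eq_zero.mp this).symm
  refine ⟨z, ⟨hfix1, hfix2⟩, ?_⟩
  rintro w ⟨hw1, hw2⟩
  have h := hT w z
  rw [hw1, hfix2] at h
  simp at h
  have : dist w z = 0 := by nlinarith [dist_nonneg (x := w) (y := z)]
  exact dist_eq_zero.mp this
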